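/- arXiv:1603.06420 — 5 statements merged into one kernel-verified Lean document; each statement's English description precedes it below -/
import Mathlib

section
/- The monic Padé denominator polynomial P_r(z) = Σ_{k=0}^{r} (2r−k)!/(k!(r−k)!) · (−z)^k satisfies e^{−z} − P_r(z)/P_r(−z) = O(z^{2r+1}) as z → 0; that is, the Taylor expansions of e^{−z}·P_r(−z) and P_r(z) at z = 0 agree up to and including order 2r. -/
open scoped BigOperators

/-- The (monic) Padé denominator polynomial for `e^{-z}`. -/
noncomputable def padeP (r : ℕ) (z : ℂ) : ℂ :=
  ∑ k ∈ Finset.range (r + 1),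
    ((Nat.factorial (2 * r - k) : ℂ) / ((Nat.factorial k : ℂ) * (Nat.factorial (r - k) : ℂ)))
      * (-z) ^ k

namespace PadeAux

open Finset Polynomial

/-! ### Combinatorial lemmas -/

lemma df_pascal (t d : ℕ) :
    (t+1).descFactorial d = t.descFactorial d + d * t.descFactorial (d-1) := by
  cases d with
  | zero => simp
  | succ e =>
    rw [Nat.succ_descFactorial_succ, Nat.descFactorial_succ, Nat.add_sub_cancel]
    rcases le_or_gt e t with h | h
    · rw [← add_mul]; congr 1; omega
    · rw [Nat.descFactorial_of_lt h, Nat.mul_zero, Nat.mul_zero, Nat.zero_add, Nat.mul_zero]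

lemma L1 (a b m : ℕ) (hb : b ≤ a) (hm : m + 1 ≤ a) :
    (a - m).descFactorial (a - b) =
      (a - (m+1)).descFactorial (a - b) + (a - b) * ((a - 1 - m).descFactorial (a - 1 - b)) := by
  have h1 : a - m = (a - (m+1)) + 1 := by omega
  have h2 : a - 1 - m = a - (m+1) := by omega
  rcases Nat.eq_or_lt_of_le hb with rfl | hlt
  · simp
  · have h3 : a - 1 - b = (a - b) - 1 := by omega
    rw [h1, h2, h3, df_pascal]

lemma key (b : ℕ) : ∀ j a, b ≤ a → j ≤ a →
    (∑ m ∈ range (j+1), (-1:ℤ)^m * (j.choose m) * ((a - m).descFactorial (a - b))) =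
      ((a-b).descFactorial j) * ((a - j).descFactorial (a - j - b)) := by
  intro j
  induction j with
  | zero => intro a hb _; simp
  | succ j ih =>
    intro a hb hj
    rcases Nat.eq_or_lt_of_le hb with rfl | hlt
    · simp only [Nat.sub_self, Nat.descFactorial_zero, Nat.cast_one, mul_one]
      rw [Int.alternating_sum_range_choose]
      simp [Nat.descFactorial_eq_zero_iff_lt.mpr (by omega : (0:ℕ) < j + 1)]
    · set g : ℕ → ℤ := fun m => ((a - m).descFactorial (a - b) : ℤ) with hg
      set A : ℤ := ∑ m ∈ range (j+1), (-1:ℤ)^m * (j.choose m) * g m with hA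
      set B : ℤ := ∑ m ∈ range (j+1), (-1:ℤ)^m * (j.choose m) * g (m+1) with hB
      have hA' : (∑ m ∈ range (j+2), (-1:ℤ)^m * (j.choose m) * g m) = A := by
        rw [Finset.sum_range_succ]; simp [Nat.choose_succ_self]; rfl
      rw [Finset.sum_range_succ'] at hA'
      have hA'' : (∑ i ∈ range (j+1), (-1:ℤ)^(i+1) * (j.choose (i+1)) * g (i+1)) = A - g 0 := by
        have := hA'
        simp only [pow_zero, Nat.choose_zero_right, Nat.cast_one, one_mul, mul_one] at this
        linarith
      have hs : (∑ m ∈ range (j+1+1), (-1:ℤ)^m * ((j+1).choose m) * g m) = A - B := by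
        rw [Finset.sum_range_succ']
        have expand : ∀ i ∈ range (j+1), (-1:ℤ)^(i+1) * ((j+1).choose (i+1)) * g (i+1)
            = -((-1:ℤ)^i * (j.choose i) * g (i+1)) + (-1:ℤ)^(i+1) * (j.choose (i+1)) * g (i+1) := by
          intro i _
          rw [Nat.choose_succ_succ]
          push_cast
          ring
        rw [Finset.sum_congr rfl expand, Finset.sum_add_distrib, hA'']
        simp only [pow_zero, Nat.choose_zero_right, Nat.cast_one, one_mul, mul_one]
        have : (∑ i ∈ range (j+1), -((-1:ℤ)^i * (j.choose i) * g (i+1))) = -B := by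
          rw [hB, ← Finset.sum_neg_distrib]
        rw [this]
        ring
      rw [hs]
      have hAB : A - B = ∑ m ∈ range (j+1), (-1:ℤ)^m * (j.choose m) * (g m - g (m+1)) := by
        rw [hA, hB, ← Finset.sum_sub_distrib]
        apply Finset.sum_congr rfl; intro m _; ring
      have e2 : ∀ m ∈ range (j+1),
          (-1:ℤ)^m * (j.choose m) * (g m - g (m+1))
          = ((a - b : ℕ) : ℤ) * ((-1:ℤ)^m * (j.choose m) * (((a-1) - m).descFactorial ((a-1) - b) : ℤ)) := by
        intro m hm
        rw [Finset.mem_range] at hm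
        have hL := L1 a b m hb (by omega)
        have hgd : g m - g (m+1) = ((a - b : ℕ) : ℤ) * (((a-1) - m).descFactorial ((a-1) - b) : ℤ) := by
          rw [hg]
          simp only []
          rw [hL]
          push_cast
          ring
        rw [hgd]; ring
      rw [hAB, Finset.sum_congr rfl e2, ← Finset.mul_sum,
        ih (a-1) (by omega) (by omega)]
      have e3 : (a - b).descFactorial (j+1) = (a - b) * ((a - 1 - b).descFactorial j) := by
        have h : a - b = (a - 1 - b) + 1 := by omega
        rw [h, Nat.succ_descFactorial_succ]
      have e4 : a - 1 - j = a - (j+1) := by omega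
      rw [e3, e4]
      push_cast
      ring

lemma key2 (r j : ℕ) (hj : j ≤ 2*r) :
    (r.descFactorial j) * ((2*r - j).descFactorial (r - j)) = (2*r - j).descFactorial r := by
  rcases le_or_gt j r with h | h
  · have h1 : (r - j).factorial * ((2*r-j).descFactorial r) = (2*r-j).factorial := by
      have := Nat.factorial_mul_descFactorial (show r ≤ 2*r - j by omega)
      rwa [show 2*r-j-r = r - j by omega] at this
    have h2 : (r).factorial * ((2*r-j).descFactorial (r-j)) = (2*r-j).factorial := by
      have := Nat.factorial_mul_descFactorial (show r - j ≤ 2*r - j by omega)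
      rwa [show 2*r-j-(r-j) = r by omega] at this
    have h3 : (r - j).factorial * (r.descFactorial j) = r.factorial :=
      Nat.factorial_mul_descFactorial h
    have hpos := Nat.factorial_pos (r - j)
    apply Nat.eq_of_mul_eq_mul_left hpos
    calc (r-j).factorial * ((r.descFactorial j) * ((2*r - j).descFactorial (r - j)))
        = ((r-j).factorial * (r.descFactorial j)) * ((2*r - j).descFactorial (r - j)) := by ring
      _ = r.factorial * ((2*r - j).descFactorial (r - j)) := by rw [h3]
      _ = (2*r-j).factorial := h2
      _ = (r - j).factorial * ((2*r-j).descFactorial r) := h1.symm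
  · rw [Nat.descFactorial_of_lt h, Nat.descFactorial_of_lt (show 2*r - j < r by omega), Nat.zero_mul]

/-! ### The polynomials -/

noncomputable def padeC (r k : ℕ) : ℂ :=
  (Nat.factorial (2 * r - k) : ℂ) / ((Nat.factorial k : ℂ) * (Nat.factorial (r - k) : ℂ))

noncomputable def Qa (r : ℕ) : Polynomial ℂ :=
  ∑ k ∈ Finset.range (r + 1), Polynomial.C (padeC r k) * Polynomial.X ^ k

noncomputable def Qb (r : ℕ) : Polynomial ℂ :=
  ∑ k ∈ Finset.range (r + 1), Polynomial.C ((-1)^k * padeC r k) * Polynomial.X ^ k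

lemma Qa_eval (r : ℕ) (z : ℂ) : (Qa r).eval z = padeP r (-z) := by
  simp [Qa, padeP, padeC, eval_finset_sum]

lemma Qb_eval (r : ℕ) (z : ℂ) : (Qb r).eval z = padeP r z := by
  simp only [Qb, padeP, padeC, eval_finset_sum, eval_mul, eval_C, eval_pow, eval_X]
  refine Finset.sum_congr rfl fun k _ => ?_
  rw [neg_pow z k]
  ring

lemma coeffQ (f : ℕ → ℂ) (r n : ℕ) :
    (∑ k ∈ Finset.range (r + 1), Polynomial.C (f k) * Polynomial.X ^ k).coeff n
      = if n ≤ r then f n else 0 := by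
  rw [finset_sum_coeff]
  simp only [coeff_C_mul, coeff_X_pow, mul_ite, mul_one, mul_zero]
  rw [Finset.sum_ite_eq (Finset.range (r+1)) n f]
  simp [Nat.lt_succ_iff]

/-! ### Iterated derivatives -/

lemma deriv_comb (P R : Polynomial ℂ) :
    (deriv fun z : ℂ => Complex.exp (-z) * P.eval z - R.eval z)
      = fun z => Complex.exp (-z) * (P.derivative - P).eval z - R.derivative.eval z := by
  funext z
  have h1 : HasDerivAt (fun z : ℂ => Complex.exp (-z)) (Complex.exp (-z) * (-1)) z := by
    have := (Complex.hasDerivAt_exp (-z)).comp z ((hasDerivAt_id z).neg)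
    exact this
  have h2 := P.hasDerivAt z
  have h3 := R.hasDerivAt z
  have h : HasDerivAt (fun z : ℂ => Complex.exp (-z) * P.eval z - R.eval z) _ z := ((h1.mul h2).sub h3)
  rw [h.deriv]
  simp [eval_sub]
  ring

lemma iter_comb (j : ℕ) : ∀ (P R : Polynomial ℂ),
    iteratedDeriv j (fun z : ℂ => Complex.exp (-z) * P.eval z - R.eval z)
      = fun z => Complex.exp (-z) * ((fun p => Polynomial.derivative p - p)^[j] P).eval z
          - ((fun p : Polynomial ℂ => Polynomial.derivative p)^[j] R).eval z := by
  induction j with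
  | zero => intro P R; simp [iteratedDeriv_zero]
  | succ j ih =>
    intro P R
    rw [iteratedDeriv_succ', deriv_comb, ih]
    rw [Function.iterate_succ_apply, Function.iterate_succ_apply]

lemma neg_one_pow_apply (k : ℕ) (q : Polynomial ℂ) :
    (((-1 : Module.End ℂ (Polynomial ℂ)))^k) q = ((-1:ℂ)^k) • q := by
  induction k with
  | zero => simp
  | succ k ih =>
    rw [pow_succ, Module.End.mul_apply, pow_succ]
    simp only [LinearMap.neg_apply, Module.End.one_apply]
    rw [map_neg, ih]
    module

lemma iter_T_pow (j : ℕ) : ∀ (P : Polynomial ℂ),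
    (fun p : Polynomial ℂ => Polynomial.derivative p - p)^[j] P
      = (((Polynomial.derivative : Module.End ℂ (Polynomial ℂ)) - 1)^j) P := by
  induction j with
  | zero => intro P; simp
  | succ j ih =>
    intro P
    rw [Function.iterate_succ_apply, ih, pow_succ]
    rw [Module.End.mul_apply]
    congr 1

lemma eval0_iterT (j : ℕ) (P : Polynomial ℂ) :
    ((fun p : Polynomial ℂ => Polynomial.derivative p - p)^[j] P).eval 0
      = ∑ m ∈ range (j+1), (-1:ℂ)^(j-m) * (j.choose m) * ((m.factorial : ℂ) * P.coeff m) := by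
  rw [iter_T_pow]
  have hcomm : Commute (Polynomial.derivative : Module.End ℂ (Polynomial ℂ))
      (-1 : Module.End ℂ (Polynomial ℂ)) := Commute.neg_one_right (R := Module.End ℂ (Polynomial ℂ)) _
  rw [sub_eq_add_neg, hcomm.add_pow, LinearMap.sum_apply, eval_finset_sum]
  refine Finset.sum_congr rfl fun m hm => ?_
  rw [Module.End.mul_apply, Module.End.mul_apply, Module.End.natCast_apply, neg_one_pow_apply]
  rw [map_smul, _root_.map_nsmul, Module.End.pow_apply]
  rw [eval_smul, eval_smul, ← coeff_zero_eq_eval_zero, Polynomial.coeff_iterate_derivative,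
    Nat.zero_add, Nat.descFactorial_self]
  simp only [smul_eq_mul, nsmul_eq_mul]
  ring

/-! ### Coefficient identities over ℂ -/

lemma fact_c (r m : ℕ) (hm : m ≤ 2*r) :
    (m.factorial : ℂ) * (if m ≤ r then padeC r m else 0)
      = ((2*r - m).descFactorial r : ℂ) := by
  split_ifs with h
  · have hfac : ((2*r - m).factorial : ℂ)
        = ((r-m).factorial : ℂ) * ((2*r-m).descFactorial r : ℂ) := by
      have := Nat.factorial_mul_descFactorial (show r ≤ 2*r - m by omega)
      rw [show 2*r - m - r = r - m by omega] at this
      exact_mod_cast this.symm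
    rw [padeC, hfac]
    have h1 : (m.factorial : ℂ) ≠ 0 := Nat.cast_ne_zero.mpr (Nat.factorial_ne_zero m)
    have h2 : ((r-m).factorial : ℂ) ≠ 0 := Nat.cast_ne_zero.mpr (Nat.factorial_ne_zero (r-m))
    field_simp
  · rw [Nat.descFactorial_of_lt (by omega), mul_zero]
    simp

lemma keyC (r j : ℕ) (hj : j ≤ 2*r) :
    (∑ m ∈ range (j+1), (-1:ℂ)^m * (j.choose m) * ((2*r - m).descFactorial r : ℂ))
      = ((2*r - j).descFactorial r : ℂ) := by
  have h1 := key r j (2*r) (by omega) hj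
  rw [show 2*r - r = r by omega, show 2*r - j - r = r - j by omega] at h1
  rw [← Nat.cast_mul, key2 r j hj] at h1
  have h2 := congrArg (fun x : ℤ => (x : ℂ)) h1
  push_cast at h2
  exact h2

lemma sign_split (j m : ℕ) (hm : m ≤ j) : (-1:ℂ)^(j-m) = (-1)^j * (-1)^m := by
  have h := pow_add (-1:ℂ) (j-m) m
  rw [Nat.sub_add_cancel hm] at h
  have hm2 : ((-1:ℂ)^m) * ((-1:ℂ)^m) = 1 := by
    rw [← pow_add, ← two_mul, pow_mul]
    norm_num
  rw [h, mul_assoc, hm2, mul_one]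

end PadeAux

/-- `e^{-z} - P_r(z)/P_r(-z) = O(z^{2r+1})` as `z → 0`: the Taylor expansions of
`e^{-z} P_r(-z)` and `P_r(z)` at `0` agree up to and including order `2r`. -/
theorem pade_exp_contact (r : ℕ) (j : ℕ) (hj : j ≤ 2 * r) :
    iteratedDeriv j (fun z : ℂ => Complex.exp (-z) * padeP r (-z) - padeP r z) 0 = 0 := by
  classical
  open Finset Polynomial PadeAux in
  have hfun : (fun z : ℂ => Complex.exp (-z) * padeP r (-z) - padeP r z)
      = fun z => Complex.exp (-z) * (Qa r).eval z - (Qb r).eval z := by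
    funext z; rw [Qa_eval, Qb_eval]
  rw [hfun, iter_comb]
  simp only [neg_zero, Complex.exp_zero, one_mul]
  rw [eval0_iterT]
  have hQb : (((fun p : Polynomial ℂ => Polynomial.derivative p)^[j]) (Qb r)).eval 0
      = (j.factorial : ℂ) * (Qb r).coeff j := by
    rw [← coeff_zero_eq_eval_zero, Polynomial.coeff_iterate_derivative,
      Nat.zero_add, Nat.descFactorial_self, nsmul_eq_mul]
  rw [hQb]
  have hQbc : (Qb r).coeff j = (-1:ℂ)^j * (if j ≤ r then padeC r j else 0) := by
    rw [Qb, coeffQ]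
    split_ifs with h <;> simp
  have hQac : ∀ m, (Qa r).coeff m = if m ≤ r then padeC r m else 0 := fun m => by
    rw [Qa, coeffQ]
  rw [hQbc]
  have hterm : ∀ m ∈ Finset.range (j+1),
      (-1:ℂ)^(j-m) * (j.choose m) * ((m.factorial : ℂ) * (Qa r).coeff m)
        = (-1:ℂ)^j * ((-1:ℂ)^m * (j.choose m) * ((2*r - m).descFactorial r : ℂ)) := by
    intro m hm
    rw [Finset.mem_range, Nat.lt_succ_iff] at hm
    rw [hQac m, fact_c r m (by omega), sign_split j m hm]
    ring
  rw [Finset.sum_congr rfl hterm, ← Finset.mul_sum, keyC r j hj]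
  have hj' : (j.factorial : ℂ) * ((-1:ℂ)^j * (if j ≤ r then padeC r j else 0))
      = (-1:ℂ)^j * ((2*r - j).descFactorial r : ℂ) := by
    rw [← fact_c r j hj]
    ring
  rw [hj']
  ring
end

section
/- The remainder of the diagonal Padé approximation to the exponential admits the integral representation e^{−z} − P_r(z)/P_r(−z) = ((−1)^{r+1} z^{2r+1})/(r! P_r(−z)) · ∫₀¹ e^{−tz} (1−t)^r t^r dt, valid for all z with P_r(−z) ≠ 0. -/
open scoped BigOperators

namespace PadeAux

open Polynomial Finset

/-- The polynomial `X^r (1-X)^r`. -/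
noncomputable def fP (r : ℕ) : Polynomial ℂ := X ^ r * (1 - X) ^ r

lemma fP_eq (r : ℕ) : fP r = ∑ i ∈ range (r+1),
    C ((-1 : ℂ)^i * (r.choose i : ℂ)) * X ^ (r + i) := by
  rw [fP, sub_eq_add_neg, add_comm (1 : Polynomial ℂ), add_pow, Finset.mul_sum]
  refine Finset.sum_congr rfl fun i hi => ?_
  have : (-X : Polynomial ℂ) ^ i = C ((-1:ℂ)^i) * X ^ i := by
    rw [neg_eq_neg_one_mul, mul_pow, map_pow, map_neg, map_one]
  simp only [this, one_pow, mul_one, map_mul, pow_add, C_eq_natCast]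
  ring

lemma fP_coeff (r i : ℕ) : (fP r).coeff (r + i) = (-1:ℂ)^i * (r.choose i : ℂ) := by
  rw [fP_eq, finset_sum_coeff]
  simp only [coeff_C_mul, coeff_X_pow, Nat.add_right_cancel_iff, mul_ite, mul_one, mul_zero]
  have : ∀ x, (if r + i = r + x then (-1:ℂ)^x * (r.choose x : ℂ) else 0)
      = (if x = i then (-1:ℂ)^x * (r.choose x : ℂ) else 0) := by
    intro x
    congr 1
    simp [eq_comm, Nat.add_right_cancel_iff]
  simp only [this]
  rw [Finset.sum_ite_eq' (range (r+1)) i fun x => (-1:ℂ)^x * (r.choose x : ℂ)]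
  by_cases hi : i ≤ r
  · simp [Finset.mem_range, Nat.lt_succ_iff, hi]
  · simp [Finset.mem_range, Nat.lt_succ_iff, hi,
      Nat.choose_eq_zero_of_lt (show r < i by omega)]

lemma fP_coeff_lt (r j : ℕ) (h : j < r) : (fP r).coeff j = 0 := by
  rw [fP, mul_comm, coeff_mul_X_pow']
  simp [Nat.not_le_of_lt h]

lemma fP_natDegree (r : ℕ) : (fP r).natDegree ≤ 2 * r := by
  rw [fP]
  refine natDegree_mul_le.trans ?_
  have h1 : (1 - X : Polynomial ℂ).natDegree = 1 := by
    have h : (1 - X : Polynomial ℂ) = -(X - C 1) := by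
      rw [map_one]; ring
    rw [h, natDegree_neg, natDegree_X_sub_C]
  refine le_trans (add_le_add (natDegree_pow _ _).le (natDegree_pow _ _).le) ?_
  simp [h1, natDegree_X]
  omega

/-- The antiderivative polynomial `g = ∑_j z^{-(j+1)} f^{(j)}`. -/
noncomputable def gP (r : ℕ) (z : ℂ) : Polynomial ℂ :=
  ∑ j ∈ range (2*r+1), C ((z⁻¹)^(j+1)) * derivative^[j] (fP r)

lemma gP_step (r : ℕ) (z : ℂ) (hz : z ≠ 0) :
    C z * gP r z - derivative (gP r z) = fP r := by
  rw [gP, Finset.mul_sum, derivative_sum, ← Finset.sum_sub_distrib]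
  have key : ∀ j, C z * (C (z⁻¹^(j+1)) * derivative^[j] (fP r))
      - derivative (C (z⁻¹^(j+1)) * derivative^[j] (fP r))
      = C (z⁻¹^j) * derivative^[j] (fP r) - C (z⁻¹^(j+1)) * derivative^[j+1] (fP r) := by
    intro j
    rw [derivative_C_mul, ← mul_assoc, ← map_mul, Function.iterate_succ_apply']
    congr 3
    field_simp [pow_succ]
    ring_nf; rw [mul_inv_cancel₀ hz, one_mul]
  simp only [key]
  rw [Finset.sum_range_sub' (fun j => C (z⁻¹^j) * derivative^[j] (fP r))]
  have hz0 : derivative^[2*r+1] (fP r) = 0 :=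
    Polynomial.iterate_derivative_eq_zero (lt_of_le_of_lt (fP_natDegree r) (by omega))
  simp [← Function.iterate_succ_apply, hz0]

lemma hasDeriv (r : ℕ) (z : ℂ) (hz : z ≠ 0) (t : ℝ) :
    HasDerivAt (fun s : ℝ => -(Complex.exp (-(s:ℂ)*z)) * (gP r z).eval (s:ℂ))
      (Complex.exp (-(t:ℂ)*z) * (fP r).eval (t:ℂ)) t := by
  have h1 : HasDerivAt (fun x : ℂ => -(Complex.exp (-x*z)) * (gP r z).eval x)
      (Complex.exp (-(t:ℂ)*z) * (fP r).eval (t:ℂ)) (t:ℂ) := by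
    have hexp : HasDerivAt (fun x : ℂ => Complex.exp (-x*z))
        (Complex.exp (-(t:ℂ)*z) * -z) (t:ℂ) :=
      (Complex.hasDerivAt_exp (-(t:ℂ)*z)).comp (t:ℂ)
        (by simpa using ((hasDerivAt_id (t:ℂ)).neg.mul_const z))
    have hg := (gP r z).hasDerivAt (t:ℂ)
    have := hexp.neg.mul hg
    refine this.congr_deriv ?_
    have hstep := gP_step r z hz
    have : (fP r).eval (t:ℂ) = z * (gP r z).eval (t:ℂ) - (derivative (gP r z)).eval (t:ℂ) := by
      rw [← hstep]; simp
    rw [this]; simp only [Pi.neg_apply]; ring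
  exact h1.comp_ofReal

lemma integral_eq (r : ℕ) (z : ℂ) (hz : z ≠ 0) :
    (∫ t in (0:ℝ)..1, Complex.exp (-(t:ℂ)*z) * (fP r).eval (t:ℂ))
      = (gP r z).eval 0 - Complex.exp (-z) * (gP r z).eval 1 := by
  rw [intervalIntegral.integral_eq_sub_of_hasDerivAt (fun t _ => hasDeriv r z hz t) ?_]
  · push_cast
    simp only [Complex.ofReal_one, Complex.ofReal_zero, neg_zero, zero_mul, Complex.exp_zero]
    ring_nf
  · apply Continuous.intervalIntegrable
    fun_prop

lemma gP_eval_zero (r : ℕ) (z : ℂ) :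
    (gP r z).eval 0 = ∑ i ∈ range (r+1),
      (z⁻¹)^(r+i+1) * ((r+i).factorial : ℂ) * ((-1:ℂ)^i * (r.choose i : ℂ)) := by
  rw [gP, eval_finset_sum]
  have h1 : ∀ j, (C ((z⁻¹)^(j+1)) * derivative^[j] (fP r)).eval 0
      = (z⁻¹)^(j+1) * ((j.factorial : ℂ) * (fP r).coeff j) := by
    intro j
    rw [eval_mul, eval_C, ← Polynomial.coeff_zero_eq_eval_zero, Polynomial.coeff_iterate_derivative]
    simp [Nat.descFactorial_self, nsmul_eq_mul]
  simp only [h1]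
  rw [show 2*r+1 = r + (r+1) by omega, Finset.sum_range_add]
  rw [Finset.sum_eq_zero (fun j hj => by
    rw [fP_coeff_lt r j (Finset.mem_range.mp hj)]; ring), zero_add]
  refine Finset.sum_congr rfl fun i _ => ?_
  rw [fP_coeff]
  ring

lemma iter_eval_one (r j : ℕ) :
    (derivative^[j] (fP r)).eval 1 = (-1:ℂ)^j * (derivative^[j] (fP r)).eval 0 := by
  have hcomp : (fP r).comp (1 - X) = fP r := by
    rw [fP]
    simp only [mul_comp, pow_comp, sub_comp, X_comp, one_comp, sub_sub_cancel]
    ring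
  conv_lhs => rw [← hcomp, Polynomial.iterate_derivative_comp_one_sub_X]
  simp [eval_comp]

lemma gP_eval_one (r : ℕ) (z : ℂ) :
    (gP r z).eval 1 = ∑ i ∈ range (r+1),
      (z⁻¹)^(r+i+1) * ((r+i).factorial : ℂ) * ((-1:ℂ)^(r+i) * (-1:ℂ)^i * (r.choose i : ℂ)) := by
  rw [gP, eval_finset_sum]
  have h1 : ∀ j, (C ((z⁻¹)^(j+1)) * derivative^[j] (fP r)).eval 1
      = (z⁻¹)^(j+1) * ((-1:ℂ)^j * ((j.factorial : ℂ) * (fP r).coeff j)) := by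
    intro j
    rw [eval_mul, eval_C, iter_eval_one, ← Polynomial.coeff_zero_eq_eval_zero,
      Polynomial.coeff_iterate_derivative]
    simp [Nat.descFactorial_self, nsmul_eq_mul]
  simp only [h1]
  rw [show 2*r+1 = r + (r+1) by omega, Finset.sum_range_add]
  rw [Finset.sum_eq_zero (fun j hj => by
    rw [fP_coeff_lt r j (Finset.mem_range.mp hj)]; ring), zero_add]
  refine Finset.sum_congr rfl fun i _ => ?_
  rw [fP_coeff]
  ring

lemma padeP_sum_zero (r : ℕ) (z : ℂ) (hz : z ≠ 0) :
    (∑ i ∈ range (r+1),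
      (z⁻¹)^(r+i+1) * ((r+i).factorial : ℂ) * ((-1:ℂ)^i * (r.choose i : ℂ)))
    = (-1:ℂ)^r * (r.factorial : ℂ) * (z⁻¹)^(2*r+1) * padeP r z := by
  conv_rhs => rw [padeP, ← Finset.sum_range_reflect, Finset.mul_sum]
  refine Finset.sum_congr rfl fun i hi => ?_
  have hir : i ≤ r := by simpa [Nat.lt_succ_iff] using hi
  have h1 : r + 1 - 1 - i = r - i := by omega
  rw [h1]
  have h2 : 2 * r - (r - i) = r + i := by omega
  have h3 : r - (r - i) = i := by omega
  rw [h2, h3]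
  have hch : (r.choose i : ℂ) * ((i.factorial : ℂ) * ((r-i).factorial : ℂ)) = (r.factorial : ℂ) := by
    exact_mod_cast congrArg (Nat.cast : ℕ → ℂ)
      (by rw [← Nat.choose_mul_factorial_mul_factorial hir]; ring)
  have hsgn : (-z)^(r-i) = (-1:ℂ)^(r-i) * z^(r-i) := by rw [neg_pow]
  have hzz : (z⁻¹)^(2*r+1) * z^(r-i) = (z⁻¹)^(r+i+1) := by
    rw [show 2*r+1 = (r+i+1) + (r-i) by omega, pow_add]
    field_simp
    ring_nf; rw [← mul_pow, mul_inv_cancel₀ hz, one_pow]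
  have hs2 : (-1:ℂ)^r * (-1:ℂ)^(r-i) = (-1:ℂ)^i * ((-1:ℂ)^(r-i))^2 := by
    rw [← pow_add, ← pow_mul, ← pow_add]
    congr 1
    omega
  have hfi : (Nat.factorial i : ℂ) ≠ 0 := Nat.cast_ne_zero.mpr i.factorial_ne_zero
  have hfri : (Nat.factorial (r-i) : ℂ) ≠ 0 := Nat.cast_ne_zero.mpr (r-i).factorial_ne_zero
  rw [hsgn]
  rw [mul_comm ((((r+i).factorial : ℂ)) / _) _, div_eq_mul_inv]
  have : (z⁻¹)^(r+i+1) * ((r+i).factorial : ℂ) * ((-1:ℂ)^i * (r.choose i : ℂ))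
      = (-1:ℂ)^i * ((r.choose i : ℂ) * ((i.factorial:ℂ) * ((r-i).factorial:ℂ)))
        * ((r+i).factorial : ℂ) * ((i.factorial:ℂ) * ((r-i).factorial:ℂ))⁻¹ * (z⁻¹)^(r+i+1) := by
    field_simp
  rw [this, hch, ← hzz]
  have hsq : ((-1:ℂ)^(r-i))^2 = 1 := by
    rw [← pow_mul, pow_mul']
    norm_num
  have hsr : (-1:ℂ)^r * (-1:ℂ)^(r-i) = (-1:ℂ)^i := by rw [hs2, hsq, mul_one]
  field_simp
  rw [← hsr]
  ring

lemma padeP_sum_one (r : ℕ) (z : ℂ) (hz : z ≠ 0) :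
    (∑ i ∈ range (r+1),
      (z⁻¹)^(r+i+1) * ((r+i).factorial : ℂ) * ((-1:ℂ)^(r+i) * (-1:ℂ)^i * (r.choose i : ℂ)))
    = (-1:ℂ)^r * (r.factorial : ℂ) * (z⁻¹)^(2*r+1) * padeP r (-z) := by
  conv_rhs => rw [padeP, ← Finset.sum_range_reflect, Finset.mul_sum]
  refine Finset.sum_congr rfl fun i hi => ?_
  have hir : i ≤ r := by simpa [Nat.lt_succ_iff] using hi
  have h1 : r + 1 - 1 - i = r - i := by omega
  rw [h1]
  have h2 : 2 * r - (r - i) = r + i := by omega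
  have h3 : r - (r - i) = i := by omega
  rw [h2, h3, neg_neg]
  have hch : (r.choose i : ℂ) * ((i.factorial : ℂ) * ((r-i).factorial : ℂ)) = (r.factorial : ℂ) := by
    exact_mod_cast congrArg (Nat.cast : ℕ → ℂ)
      (by rw [← Nat.choose_mul_factorial_mul_factorial hir]; ring)
  have hzz : (z⁻¹)^(2*r+1) * z^(r-i) = (z⁻¹)^(r+i+1) := by
    rw [show 2*r+1 = (r+i+1) + (r-i) by omega, pow_add]
    field_simp
    ring_nf; rw [← mul_pow, mul_inv_cancel₀ hz, one_pow]
  have hsgn : (-1:ℂ)^(r+i) * (-1:ℂ)^i = (-1:ℂ)^r := by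
    rw [← pow_add, show r+i+i = r + 2*i by omega, pow_add, pow_mul]
    norm_num
  have hfi : (Nat.factorial i : ℂ) ≠ 0 := Nat.cast_ne_zero.mpr i.factorial_ne_zero
  have hfri : (Nat.factorial (r-i) : ℂ) ≠ 0 := Nat.cast_ne_zero.mpr (r-i).factorial_ne_zero
  rw [hsgn, ← hch, ← hzz]
  field_simp

lemma final_alg (E Pz Pm A c fac : ℂ) (hfac : fac ≠ 0) (hPm : Pm ≠ 0)
    (hCA : c * A = -fac) :
    E - Pz / Pm = c / (fac * Pm) * (A * Pz - E * (A * Pm)) := by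
  field_simp
  linear_combination (E * Pm - Pz) * hCA

end PadeAux

/-- The integral representation of the remainder of the diagonal Padé approximation:
`e^{−z} − P_r(z)/P_r(−z) = ((−1)^{r+1} z^{2r+1})/(r! P_r(−z)) ∫₀¹ e^{−tz}(1−t)^r t^r dt`
whenever `P_r(−z) ≠ 0`. -/
theorem pade_exp_remainder (r : ℕ) (z : ℂ) (h : padeP r (-z) ≠ 0) :
    Complex.exp (-z) - padeP r z / padeP r (-z)
      = ((-1 : ℂ) ^ (r + 1) * z ^ (2 * r + 1)) / ((Nat.factorial r : ℂ) * padeP r (-z))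
        * ∫ t in (0:ℝ)..1, Complex.exp (-(t : ℂ) * z) * ((1 : ℂ) - (t : ℂ)) ^ r * (t : ℂ) ^ r := by
  by_cases hz : z = 0
  · subst hz
    simp only [neg_zero] at h ⊢
    rw [Complex.exp_zero, div_self h]
    simp
  · open PadeAux in
    have hI : (∫ t in (0:ℝ)..1,
        Complex.exp (-(t : ℂ) * z) * ((1 : ℂ) - (t : ℂ)) ^ r * (t : ℂ) ^ r)
        = (gP r z).eval 0 - Complex.exp (-z) * (gP r z).eval 1 := by
      rw [← integral_eq r z hz]
      refine intervalIntegral.integral_congr fun t _ => ?_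
      simp only [fP, Polynomial.eval_mul, Polynomial.eval_pow, Polynomial.eval_X,
        Polynomial.eval_sub, Polynomial.eval_one]
      ring
    rw [hI, gP_eval_zero, gP_eval_one, padeP_sum_zero r z hz, padeP_sum_one r z hz]
    have hfr : (Nat.factorial r : ℂ) ≠ 0 := Nat.cast_ne_zero.mpr r.factorial_ne_zero
    have hCA : ((-1:ℂ)^(r+1) * z^(2*r+1)) * ((-1:ℂ)^r * (Nat.factorial r : ℂ) * (z⁻¹)^(2*r+1))
        = -(Nat.factorial r : ℂ) := by
      have hzz : z^(2*r+1) * (z⁻¹)^(2*r+1) = 1 := by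
        rw [← mul_pow, mul_inv_cancel₀ hz, one_pow]
      have hm1 : (-1:ℂ)^(r+1) * (-1:ℂ)^r = -1 := by
        rw [← pow_add, show r+1+r = 2*r+1 by omega]
        exact Odd.neg_one_pow ⟨r, by ring⟩
      calc ((-1:ℂ)^(r+1) * z^(2*r+1)) * ((-1:ℂ)^r * (Nat.factorial r : ℂ) * (z⁻¹)^(2*r+1))
          = ((-1:ℂ)^(r+1) * (-1:ℂ)^r) * (z^(2*r+1) * (z⁻¹)^(2*r+1)) * (Nat.factorial r : ℂ) := by
            ring
        _ = -(Nat.factorial r : ℂ) := by rw [hm1, hzz]; ring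
    exact final_alg (Complex.exp (-z)) (padeP r z) (padeP r (-z)) _ _ _ hfr h hCA
end

section
/- The normalizing Gaussian matrix integral over n×n Hermitian matrices evaluates to ∫_{H_n} dM e^{−Tr(Y M²)} = π^{n²/2} / (∏_{j=1}^n √{y_j} · ∏_{j<k} (y_j + y_k)), where Y = diag(y_1,…,y_n) with Re y_j > 0 and dM is Lebesgue measure on the real and imaginary parts of the entries. -/
open MeasureTheory Complex Real

open MeasureTheory
open scoped BigOperators

/-- Parametrization of `n×n` Hermitian matrices by the diagonal (real) entries and the
strictly-upper-triangular (complex) entries. -/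
noncomputable def hermOf (n : ℕ)
    (x : (Fin n → ℝ) × ({ p : Fin n × Fin n // p.1 < p.2 } → ℂ)) :
    Matrix (Fin n) (Fin n) ℂ :=
  Matrix.of fun i j =>
    if h : i < j then x.2 ⟨(i, j), h⟩
    else if h' : j < i then (starRingEnd ℂ) (x.2 ⟨(j, i), h'⟩)
    else ((x.1 i : ℝ) : ℂ)


lemma re_cpow_half_pos {w : ℂ} (hw : 0 < w.re) : 0 < (w ^ ((1:ℂ)/2)).re := by
  have hne : w ≠ 0 := fun h => by simp [h] at hw
  rw [Complex.cpow_def_of_ne_zero hne, Complex.exp_re]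
  apply mul_pos (Real.exp_pos _)
  apply Real.cos_pos_of_mem_Ioo
  have harg : |w.arg| < Real.pi / 2 := Complex.abs_arg_lt_pi_div_two_iff.2 (Or.inl hw)
  have him : (Complex.log w * ((1:ℂ)/2)).im = w.arg / 2 := by
    simp [Complex.log_im, Complex.mul_im]
    ring
  rw [him]
  constructor
  · nlinarith [abs_lt.1 harg, Real.pi_pos]
  · nlinarith [abs_lt.1 harg, Real.pi_pos]

lemma sq_eq_sq_pos_re {a b : ℂ} (ha : 0 < a.re) (hb : 0 < b.re) (h : a ^ 2 = b ^ 2) : a = b := by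
  rcases sq_eq_sq_iff_eq_or_eq_neg.1 h with h1 | h1
  · exact h1
  · exfalso; rw [h1] at ha; simp at ha; linarith

lemma cpow_half_sq {w : ℂ} (hw : w ≠ 0) : (w ^ ((1:ℂ)/2)) ^ 2 = w := by
  rw [sq, ← Complex.cpow_add _ _ hw]
  norm_num

lemma cpow_half_div {y : ℂ} (hy : 0 < y.re) :
    ((Real.pi : ℂ) / y) ^ ((1:ℂ)/2) = (Real.pi : ℂ) ^ ((1:ℂ)/2) / y ^ ((1:ℂ)/2) := by
  have hy0 : y ≠ 0 := fun h => by simp [h] at hy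
  have hpi0 : (Real.pi : ℂ) ≠ 0 := by
    simpa using Real.pi_ne_zero
  have hdre : 0 < ((Real.pi : ℂ) / y).re := by
    rw [Complex.div_re]
    simp only [Complex.ofReal_re, Complex.ofReal_im]
    have h3 : 0 < Complex.normSq y := Complex.normSq_pos.2 hy0
    have := Real.pi_pos
    have h4 : (0:ℝ) * y.im / Complex.normSq y = 0 := by simp
    rw [h4, add_zero]
    positivity
  apply sq_eq_sq_pos_re (re_cpow_half_pos hdre)
  · have h1 : 0 < ((Real.pi:ℂ) ^ ((1:ℂ)/2)).re := re_cpow_half_pos (by simpa using Real.pi_pos)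
    have h2 : 0 < (y ^ ((1:ℂ)/2)).re := re_cpow_half_pos hy
    have him : ((Real.pi:ℂ) ^ ((1:ℂ)/2)).im = 0 := by
      have hc : ((1:ℂ)/2) = (((1/2:ℝ)):ℂ) := by norm_num
      rw [hc, ← Complex.ofReal_cpow Real.pi_pos.le]
      simp
    rw [Complex.div_re, him]
    have : 0 < Complex.normSq (y ^ ((1:ℂ)/2)) :=
      Complex.normSq_pos.2 (by intro h; rw [h] at h2; simp at h2)
    simp only [zero_mul, zero_div, add_zero]
    positivity
  · rw [div_pow, cpow_half_sq hpi0, cpow_half_sq hy0, cpow_half_sq (div_ne_zero hpi0 hy0)]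

lemma integral_cexp_neg_mul_normSq {c : ℂ} (hc : 0 < c.re) :
    ∫ z : ℂ, Complex.exp (-(c * ((Complex.normSq z : ℝ) : ℂ))) = (Real.pi : ℂ) / c := by
  have hmp := (Complex.volume_preserving_equiv_real_prod.symm).integral_comp
    Complex.measurableEquivRealProd.symm.measurableEmbedding
    (fun z : ℂ => Complex.exp (-(c * ((Complex.normSq z : ℝ) : ℂ))))
  rw [← hmp]
  have h1 : ∀ p : ℝ × ℝ,
      Complex.exp (-(c * ((Complex.normSq (Complex.measurableEquivRealProd.symm p) : ℝ) : ℂ)))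
      = Complex.exp (-c * (p.1:ℂ)^2) * Complex.exp (-c * (p.2:ℂ)^2) := by
    intro p
    rw [← Complex.exp_add]
    congr 1
    simp [Complex.normSq_mk]
    push_cast
    ring
  simp_rw [h1]
  rw [Measure.volume_eq_prod,
    integral_prod_mul (fun t : ℝ => Complex.exp (-c * (t:ℂ)^2))
      (fun t : ℝ => Complex.exp (-c * (t:ℂ)^2)), integral_gaussian_complex hc]
  have hne : ((Real.pi : ℂ) / c) ≠ 0 := by
    apply div_ne_zero
    · simpa using Real.pi_ne_zero
    · exact fun h => by simp [h] at hc
  rw [← Complex.cpow_add _ _ hne]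
  norm_num

lemma card_pairs (n : ℕ) :
    n ^ 2 = n + 2 * (Finset.univ.filter (fun p : Fin n × Fin n => p.1 < p.2)).card := by
  classical
  have h1 := Finset.card_filter_add_card_filter_not
    (s := (Finset.univ : Finset (Fin n × Fin n))) (p := fun p => p.1 < p.2)
  have h2 := Finset.card_filter_add_card_filter_not
    (s := Finset.univ.filter (fun p : Fin n × Fin n => ¬ p.1 < p.2))
    (p := fun p => p.2 < p.1)
  rw [Finset.filter_filter, Finset.filter_filter] at h2
  have e1 : Finset.univ.filter (fun p : Fin n × Fin n => ¬ p.1 < p.2 ∧ p.2 < p.1)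
      = Finset.univ.filter (fun p : Fin n × Fin n => p.2 < p.1) := by
    apply Finset.filter_congr
    intro p _
    constructor
    · exact fun h => h.2
    · exact fun h => ⟨asymm h, h⟩
  have e2 : Finset.univ.filter (fun p : Fin n × Fin n => ¬ p.1 < p.2 ∧ ¬ p.2 < p.1)
      = Finset.univ.filter (fun p : Fin n × Fin n => p.1 = p.2) := by
    apply Finset.filter_congr
    intro p _
    constructor
    · exact fun h => le_antisymm (not_lt.1 h.2) (not_lt.1 h.1)
    · exact fun h => ⟨by omega, by omega⟩
  have e3 : (Finset.univ.filter (fun p : Fin n × Fin n => p.2 < p.1)).card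
      = (Finset.univ.filter (fun p : Fin n × Fin n => p.1 < p.2)).card := by
    apply Finset.card_nbij' (fun p => (p.2, p.1)) (fun p => (p.2, p.1)) <;>
      simp [Finset.mem_filter, Set.MapsTo, Set.LeftInvOn, Set.RightInvOn]
  have e4 : (Finset.univ.filter (fun p : Fin n × Fin n => p.1 = p.2)).card = n := by
    rw [show (Finset.univ.filter (fun p : Fin n × Fin n => p.1 = p.2))
        = Finset.univ.image (fun i : Fin n => (i, i)) from ?_]
    · rw [Finset.card_image_of_injective _ (fun a b h => by simpa [Prod.ext_iff] using h)]
      simp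
    · ext p
      simp only [Finset.mem_filter, Finset.mem_image, Finset.mem_univ, true_and, Prod.ext_iff]
      exact ⟨fun h => ⟨p.1, rfl, h⟩, fun ⟨a, h1, h2⟩ => h1 ▸ h2 ▸ rfl⟩
  have hcard : (Finset.univ : Finset (Fin n × Fin n)).card = n ^ 2 := by
    simp [sq]
  rw [e1, e2, e3, e4] at h2
  omega

lemma trace_herm (n : ℕ) (y : Fin n → ℂ)
    (x : (Fin n → ℝ) × ({ p : Fin n × Fin n // p.1 < p.2 } → ℂ)) :
    Matrix.trace (Matrix.diagonal y * hermOf n x ^ 2)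
    = (∑ i, y i * ((x.1 i : ℝ) : ℂ) ^ 2)
      + ∑ p : { p : Fin n × Fin n // p.1 < p.2 },
          (y p.1.1 + y p.1.2) * ((Complex.normSq (x.2 p) : ℝ) : ℂ) := by
  classical
  set M := hermOf n x with hM
  have hMd : ∀ i, M i i = ((x.1 i : ℝ) : ℂ) := by
    intro i; simp [hM, hermOf]
  have hMu : ∀ (i j : Fin n) (h : i < j), M i j = x.2 ⟨(i, j), h⟩ := by
    intro i j h; simp [hM, hermOf, h]
  have hMl : ∀ (i j : Fin n) (h : i < j), M j i = (starRingEnd ℂ) (x.2 ⟨(i, j), h⟩) := by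
    intro i j h; simp [hM, hermOf, h, asymm h]
  have htr : Matrix.trace (Matrix.diagonal y * M ^ 2)
      = ∑ p : Fin n × Fin n, y p.1 * (M p.1 p.2 * M p.2 p.1) := by
    rw [sq, Matrix.trace]
    rw [← Finset.univ_product_univ, Finset.sum_product]
    apply Finset.sum_congr rfl
    intro i _
    rw [Matrix.diag_apply, Matrix.diagonal_mul, Matrix.mul_apply, Finset.mul_sum]
  rw [htr]
  set f : Fin n × Fin n → ℂ := fun p => y p.1 * (M p.1 p.2 * M p.2 p.1) with hf
  have h1 := Finset.sum_filter_add_sum_filter_not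
    (Finset.univ : Finset (Fin n × Fin n)) (fun p => p.1 < p.2) f
  have h2 := Finset.sum_filter_add_sum_filter_not
    (Finset.univ.filter (fun p : Fin n × Fin n => ¬ p.1 < p.2)) (fun p => p.2 < p.1) f
  rw [Finset.filter_filter, Finset.filter_filter] at h2
  have e1 : Finset.univ.filter (fun p : Fin n × Fin n => ¬ p.1 < p.2 ∧ p.2 < p.1)
      = Finset.univ.filter (fun p : Fin n × Fin n => p.2 < p.1) := by
    apply Finset.filter_congr
    intro p _
    exact ⟨fun h => h.2, fun h => ⟨asymm h, h⟩⟩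
  have e2 : Finset.univ.filter (fun p : Fin n × Fin n => ¬ p.1 < p.2 ∧ ¬ p.2 < p.1)
      = Finset.univ.image (fun i : Fin n => (i, i)) := by
    ext p
    simp only [Finset.mem_filter, Finset.mem_image, Finset.mem_univ, true_and, Prod.ext_iff]
    constructor
    · exact fun h => ⟨p.1, rfl, le_antisymm (not_lt.1 h.2) (not_lt.1 h.1)⟩
    · rintro ⟨a, h1, h2⟩
      rw [← h1, ← h2]
      exact ⟨lt_irrefl a, lt_irrefl a⟩
  rw [e1, e2] at h2
  have hdiag : ∑ p ∈ Finset.univ.image (fun i : Fin n => (i, i)), f p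
      = ∑ i, y i * ((x.1 i : ℝ) : ℂ) ^ 2 := by
    rw [Finset.sum_image (fun a _ b _ h => by simpa [Prod.ext_iff] using h)]
    apply Finset.sum_congr rfl
    intro i _
    rw [hf]; simp only [hMd i]; ring
  have hgt : ∑ p ∈ Finset.univ.filter (fun p : Fin n × Fin n => p.2 < p.1), f p
      = ∑ p ∈ Finset.univ.filter (fun p : Fin n × Fin n => p.1 < p.2),
          y p.2 * (M p.2 p.1 * M p.1 p.2) := by
    apply Finset.sum_nbij' (fun p => (p.2, p.1)) (fun p => (p.2, p.1)) <;>
      simp [Finset.mem_filter, hf]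
  have hlt : ∑ p ∈ Finset.univ.filter (fun p : Fin n × Fin n => p.1 < p.2),
        (f p + y p.2 * (M p.2 p.1 * M p.1 p.2))
      = ∑ p : { p : Fin n × Fin n // p.1 < p.2 },
          (y p.1.1 + y p.1.2) * ((Complex.normSq (x.2 p) : ℝ) : ℂ) := by
    rw [Finset.sum_subtype (p := fun p : Fin n × Fin n => p.1 < p.2)
      (Finset.univ.filter (fun p : Fin n × Fin n => p.1 < p.2))
      (fun p => by simp) (fun p => f p + y p.2 * (M p.2 p.1 * M p.1 p.2))]
    apply Finset.sum_congr rfl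
    intro p _
    obtain ⟨⟨i, j⟩, hij⟩ := p
    simp only [hf]
    rw [hMu i j hij, hMl i j hij,
      mul_comm ((starRingEnd ℂ) (x.2 ⟨(i, j), hij⟩)) (x.2 ⟨(i, j), hij⟩), Complex.mul_conj]
    ring
  rw [← h1, ← h2, hdiag, hgt, ← add_assoc, ← Finset.sum_add_distrib, hlt]
  ring

/-- The Gaussian matrix integral over `n×n` Hermitian matrices:
`∫_{H_n} dM e^{−Tr(Y M²)} = π^{n²/2} / (∏ √y_j ∏_{j<k}(y_j + y_k))`,
for `Y = diag(y_1,…,y_n)` with `Re y_j > 0`, where `dM` is the Lebesgue measure on the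
real and imaginary parts of the entries. -/
theorem gaussian_hermitian_integral (n : ℕ) (y : Fin n → ℂ) (hy : ∀ j, 0 < (y j).re) :
    ∫ x : (Fin n → ℝ) × ({ p : Fin n × Fin n // p.1 < p.2 } → ℂ),
        Complex.exp (-(Matrix.trace (Matrix.diagonal y * hermOf n x ^ 2)))
      = (Real.pi : ℂ) ^ (((n ^ 2 : ℕ) : ℂ) / 2)
        / ((∏ j, (y j) ^ ((1 : ℂ) / 2))
            * ∏ p ∈ Finset.univ.filter (fun p : Fin n × Fin n => p.1 < p.2),
                (y p.1 + y p.2)) := by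
  classical
  set S := { p : Fin n × Fin n // p.1 < p.2 }
  have hre : ∀ p : S, 0 < (y p.1.1 + y p.1.2).re := by
    intro p
    rw [Complex.add_re]
    exact add_pos (hy _) (hy _)
  set f : Fin n → ℝ → ℂ := fun i t => Complex.exp (-(y i) * (t : ℂ) ^ 2) with hfdef
  set g : S → ℂ → ℂ :=
    fun p z => Complex.exp (-((y p.1.1 + y p.1.2) * ((Complex.normSq z : ℝ) : ℂ))) with hgdef
  have key : (fun x : (Fin n → ℝ) × (S → ℂ) =>
        Complex.exp (-(Matrix.trace (Matrix.diagonal y * hermOf n x ^ 2))))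
      = fun x => (∏ i, f i (x.1 i)) * ∏ p, g p (x.2 p) := by
    funext x
    rw [trace_herm n y x, neg_add, Complex.exp_add]
    congr 1
    · rw [← Finset.sum_neg_distrib, Complex.exp_sum]
      exact Finset.prod_congr rfl fun i _ => by simp only [hfdef, neg_mul]
    · rw [← Finset.sum_neg_distrib, Complex.exp_sum]
  rw [show (∫ x : (Fin n → ℝ) × (S → ℂ),
        Complex.exp (-(Matrix.trace (Matrix.diagonal y * hermOf n x ^ 2))))
      = ∫ x : (Fin n → ℝ) × (S → ℂ), (∏ i, f i (x.1 i)) * ∏ p, g p (x.2 p) from by rw [key]]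
  rw [Measure.volume_eq_prod,
    integral_prod_mul (fun a : Fin n → ℝ => ∏ i, f i (a i)) (fun b : S → ℂ => ∏ p, g p (b p)),
    integral_fintype_prod_volume_eq_prod (𝕜 := ℂ) f, integral_fintype_prod_volume_eq_prod (𝕜 := ℂ) g]
  have hgauss : ∀ i, ∫ t : ℝ, f i t = ((Real.pi : ℂ) / y i) ^ ((1:ℂ)/2) :=
    fun i => integral_gaussian_complex (hy i)
  have hgauss2 : ∀ p : S, ∫ z : ℂ, g p z = (Real.pi : ℂ) / (y p.1.1 + y p.1.2) :=
    fun p => integral_cexp_neg_mul_normSq (hre p)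
  rw [Finset.prod_congr rfl fun i _ => hgauss i, Finset.prod_congr rfl fun p _ => hgauss2 p]
  have hprod1 : ∏ i, ((Real.pi : ℂ) / y i) ^ ((1:ℂ)/2)
      = ((Real.pi : ℂ) ^ ((1:ℂ)/2)) ^ n / ∏ i, (y i) ^ ((1:ℂ)/2) := by
    rw [Finset.prod_congr rfl fun i _ => cpow_half_div (hy i), Finset.prod_div_distrib,
      Finset.prod_const, Finset.card_univ, Fintype.card_fin]
  have hprod2 : ∏ p : S, (Real.pi : ℂ) / (y p.1.1 + y p.1.2)
      = (Real.pi : ℂ) ^ (Fintype.card S) / ∏ p : S, (y p.1.1 + y p.1.2) := by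
    rw [Finset.prod_div_distrib, Finset.prod_const, Finset.card_univ]
  have hsub : ∏ p ∈ Finset.univ.filter (fun p : Fin n × Fin n => p.1 < p.2), (y p.1 + y p.2)
      = ∏ p : S, (y p.1.1 + y p.1.2) :=
    Finset.prod_subtype _ (fun p : Fin n × Fin n => by simp) (fun p : Fin n × Fin n => y p.1 + y p.2)
  rw [hprod1, hprod2, hsub, div_mul_div_comm]
  congr 1
  have hk : n ^ 2 = n + 2 * Fintype.card S := by
    rw [show Fintype.card S
        = (Finset.univ.filter (fun p : Fin n × Fin n => p.1 < p.2)).card from by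
      rw [Fintype.card_subtype]]
    exact card_pairs n
  set k := Fintype.card S
  have hkr : ((n:ℝ)) ^ 2 = n + 2 * k := by exact_mod_cast hk
  have hexp : (1/2 : ℝ) * n + k = ((n ^ 2 : ℕ) : ℝ) / 2 := by push_cast; linarith
  have hreal : (Real.pi ^ ((1:ℝ)/2)) ^ n * Real.pi ^ k = Real.pi ^ (((n ^ 2 : ℕ) : ℝ) / 2) := by
    rw [← Real.rpow_natCast (Real.pi ^ ((1:ℝ)/2)) n, ← Real.rpow_natCast Real.pi k,
      ← Real.rpow_mul Real.pi_pos.le, ← Real.rpow_add Real.pi_pos]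
    rw [← hexp]
  have hc : ((1:ℂ)/2) = (((1/2 : ℝ)):ℂ) := by norm_num
  have hc2 : (((n ^ 2 : ℕ) : ℂ) / 2) = ((((n ^ 2 : ℕ) : ℝ) / 2 : ℝ) : ℂ) := by push_cast; ring
  rw [hc, hc2, ← Complex.ofReal_cpow Real.pi_pos.le, ← Complex.ofReal_cpow Real.pi_pos.le,
    ← Complex.ofReal_pow, ← hreal]
  push_cast
  ring
end

section
/- Andreief's identity: for integrable functions f_1,…,f_n and g_1,…,g_n on a measure space (X, μ), ∫_{X^n} det[f_j(s_k)]_{j,k=1}^n · det[g_j(s_k)]_{j,k=1}^n ∏_{k=1}^n dμ(s_k) = n! · det[∫_X f_j(s) g_k(s) dμ(s)]_{j,k=1}^n. -/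
open MeasureTheory
open scoped BigOperators

private lemma andreief_aux {n : ℕ} (A : Matrix (Fin n) (Fin n) ℂ) (σ : Equiv.Perm (Fin n)) :
    ∑ τ : Equiv.Perm (Fin n),
      ((Equiv.Perm.sign σ : ℤ) : ℂ) * ((Equiv.Perm.sign τ : ℤ) : ℂ)
        * ∏ k, A (σ k) (τ k) = A.det := by
  rw [← Matrix.det_transpose A, Matrix.det_apply']
  refine Fintype.sum_equiv (Equiv.mulRight σ⁻¹) _ _ fun x => ?_
  have h1 : ∏ i, A.transpose ((x * σ⁻¹) i) i = ∏ k, A (σ k) (x k) := by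
    rw [← Equiv.prod_comp σ (fun i => A.transpose ((x * σ⁻¹) i) i)]
    simp [Matrix.transpose_apply]
  have h2 : ((Equiv.Perm.sign (x * σ⁻¹) : ℤ) : ℂ)
      = ((Equiv.Perm.sign x : ℤ) : ℂ) * ((Equiv.Perm.sign σ : ℤ) : ℂ) := by
    simp [Equiv.Perm.sign_mul]
  simp only [Equiv.coe_mulRight]
  rw [h1, h2]
  have hs : ((Equiv.Perm.sign σ : ℤ) : ℂ) * ((Equiv.Perm.sign σ : ℤ) : ℂ) = 1 := by
    rcases Int.units_eq_one_or (Equiv.Perm.sign σ) with h | h <;> simp [h]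
  rcases Int.units_eq_one_or (Equiv.Perm.sign σ) with h | h <;> simp [h]

/-- Andreief's identity: for measurable functions `f_1,…,f_n`, `g_1,…,g_n` on a measure
space `(X, μ)` with each product `f_j g_k` integrable,
`∫_{X^n} det[f_j(s_k)] det[g_j(s_k)] ∏ dμ(s_k) = n! det[∫ f_j g_k dμ]`. -/
theorem andreief_identity {X : Type*} [MeasurableSpace X] (μ : Measure X) [SigmaFinite μ]
    (n : ℕ) (f g : Fin n → X → ℂ)
    (hf : ∀ j, Measurable (f j)) (hg : ∀ j, Measurable (g j))
    (hint : ∀ j k, Integrable (fun x => f j x * g k x) μ) :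
    ∫ s : Fin n → X,
        (Matrix.det (Matrix.of fun j k : Fin n => f j (s k)))
          * (Matrix.det (Matrix.of fun j k : Fin n => g j (s k)))
        ∂(Measure.pi fun _ : Fin n => μ)
      = (Nat.factorial n : ℂ)
        * Matrix.det (Matrix.of fun j k : Fin n => ∫ x, f j x * g k x ∂μ) := by
  letI : MeasureSpace X := ⟨μ⟩
  have hμ : (Measure.pi fun _ : Fin n => μ) = (volume : Measure (Fin n → X)) := rfl
  have hInt : ∀ σ τ : Equiv.Perm (Fin n),
      Integrable (fun s : Fin n → X => ∏ k, f (σ k) (s k) * g (τ k) (s k))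
        (Measure.pi fun _ : Fin n => μ) := by
    intro σ τ
    rw [hμ]
    exact Integrable.fintype_prod (fun k => hint (σ k) (τ k))
  set A : Matrix (Fin n) (Fin n) ℂ := Matrix.of fun j k : Fin n => ∫ x, f j x * g k x ∂μ with hA
  have expand : ∀ s : Fin n → X,
      (Matrix.det (Matrix.of fun j k : Fin n => f j (s k)))
        * (Matrix.det (Matrix.of fun j k : Fin n => g j (s k)))
      = ∑ σ : Equiv.Perm (Fin n), ∑ τ : Equiv.Perm (Fin n),
          (((Equiv.Perm.sign σ : ℤ) : ℂ) * ((Equiv.Perm.sign τ : ℤ) : ℂ))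
            * ∏ k, f (σ k) (s k) * g (τ k) (s k) := by
    intro s
    rw [Matrix.det_apply', Matrix.det_apply', Finset.sum_mul_sum]
    refine Finset.sum_congr rfl fun σ _ => Finset.sum_congr rfl fun τ _ => ?_
    simp only [Matrix.of_apply, Finset.prod_mul_distrib]
    ring
  calc ∫ s : Fin n → X,
        (Matrix.det (Matrix.of fun j k : Fin n => f j (s k)))
          * (Matrix.det (Matrix.of fun j k : Fin n => g j (s k)))
        ∂(Measure.pi fun _ : Fin n => μ)
      = ∫ s : Fin n → X, ∑ σ : Equiv.Perm (Fin n), ∑ τ : Equiv.Perm (Fin n),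
          (((Equiv.Perm.sign σ : ℤ) : ℂ) * ((Equiv.Perm.sign τ : ℤ) : ℂ))
            * ∏ k, f (σ k) (s k) * g (τ k) (s k) ∂(Measure.pi fun _ : Fin n => μ) := by
        exact integral_congr_ae (Filter.Eventually.of_forall expand)
    _ = ∑ σ : Equiv.Perm (Fin n), ∑ τ : Equiv.Perm (Fin n),
          (((Equiv.Perm.sign σ : ℤ) : ℂ) * ((Equiv.Perm.sign τ : ℤ) : ℂ))
            * ∫ s : Fin n → X, ∏ k, f (σ k) (s k) * g (τ k) (s k)
              ∂(Measure.pi fun _ : Fin n => μ) := by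
        rw [integral_finset_sum]
        · refine Finset.sum_congr rfl fun σ _ => ?_
          rw [integral_finset_sum]
          · exact Finset.sum_congr rfl fun τ _ => integral_const_mul _ _
          · exact fun τ _ => (hInt σ τ).const_mul _
        · exact fun σ _ => integrable_finset_sum _ (fun τ _ => (hInt σ τ).const_mul _)
    _ = ∑ σ : Equiv.Perm (Fin n), ∑ τ : Equiv.Perm (Fin n),
          ((Equiv.Perm.sign σ : ℤ) : ℂ) * ((Equiv.Perm.sign τ : ℤ) : ℂ)
            * ∏ k, A (σ k) (τ k) := by
        refine Finset.sum_congr rfl fun σ _ => Finset.sum_congr rfl fun τ _ => ?_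
        rw [MeasureTheory.integral_fintype_prod_eq_prod (ι := Fin n)
          (fun k (x : X) => f (σ k) x * g (τ k) x)]
        rfl
    _ = ∑ _σ : Equiv.Perm (Fin n), A.det := Finset.sum_congr rfl fun σ _ => andreief_aux A σ
    _ = (Nat.factorial n : ℂ) * A.det := by
        rw [Finset.sum_const, Finset.card_univ, Fintype.card_perm, nsmul_eq_mul, Fintype.card_fin]
end

section
/- In the block-determinant formula, repeated use of the Airy differential equation f'' = (λ + x)f allows reduction of columns: if f_1,…,f_n all satisfy f_k''(λ) = λ f_k(λ), then for any points z_1,…,z_n the n×n matrix with columns [f_k(z_k)], [f_k'(z_k)], [z_k f_k(z_k)], [z_k f_k'(z_k)], [z_k² f_k(z_k)], … (rows indexed by k) has, up to elementary column operations, the same determinant as the Wronskian-type matrix [f_k^{(j−1)}(z_k)]_{k,j=1}^n. -/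
open Polynomial Finset

/-- The pair of polynomials `(p_j, q_j)` such that any solution of `f'' = z f` satisfies
`f^{(j)}(w) = p_j(w) f(w) + q_j(w) f'(w)`. -/
noncomputable def airyP : ℕ → Polynomial ℂ × Polynomial ℂ
  | 0 => (1, 0)
  | (j+1) => ((airyP j).1.derivative + X * (airyP j).2, (airyP j).1 + (airyP j).2.derivative)

lemma airyP_coeff (j : ℕ) :
    (∀ m, j < 2*m → (airyP j).1.coeff m = 0) ∧
    (∀ m, j < 2*m+1 → (airyP j).2.coeff m = 0) ∧
    (j % 2 = 0 → (airyP j).1.coeff (j/2) = 1) ∧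
    (j % 2 = 1 → (airyP j).2.coeff (j/2) = 1) := by
  induction j with
  | zero =>
    refine ⟨fun m hm => ?_, fun m hm => ?_, fun _ => ?_, fun h => by omega⟩
    · have : m ≠ 0 := by omega
      simp [airyP, Polynomial.coeff_one, this]
    · simp [airyP]
    · simp [airyP]
  | succ j ih =>
    obtain ⟨h1, h2, h3, h4⟩ := ih
    have hc1 : ∀ m, (airyP (j+1)).1.coeff m
        = (airyP j).1.coeff (m+1) * (m+1) + (X * (airyP j).2).coeff m := by
      intro m; simp [airyP, Polynomial.coeff_derivative]
    have hc2 : ∀ m, (airyP (j+1)).2.coeff m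
        = (airyP j).1.coeff m + (airyP j).2.coeff (m+1) * (m+1) := by
      intro m; simp [airyP, Polynomial.coeff_derivative]
    refine ⟨fun m hm => ?_, fun m hm => ?_, fun hp => ?_, fun hp => ?_⟩
    · rw [hc1, h1 (m+1) (by omega), zero_mul, zero_add]
      cases m with
      | zero => omega
      | succ m' => rw [Polynomial.coeff_X_mul, h2 m' (by omega)]
    · rw [hc2, h1 m (by omega), h2 (m+1) (by omega), zero_mul, add_zero]
    · -- j+1 even, so j odd; (j+1)/2 = j/2 + 1 ≥ 1
      have hj : j % 2 = 1 := by omega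
      have hd : (j+1)/2 = j/2 + 1 := by omega
      rw [hd, hc1, h1 (j/2+1+1) (by omega), zero_mul, zero_add,
        Polynomial.coeff_X_mul, h4 hj]
    · -- j+1 odd, j even, (j+1)/2 = j/2
      have hj : j % 2 = 0 := by omega
      have hd : (j+1)/2 = j/2 := by omega
      rw [hd, hc2, h3 hj, h2 (j/2+1) (by omega), zero_mul, add_zero]

lemma airyP_natDegree_fst (j : ℕ) : (airyP j).1.natDegree ≤ j := by
  rw [Polynomial.natDegree_le_iff_coeff_eq_zero]
  exact fun N hN => (airyP_coeff j).1 N (by omega)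

lemma airyP_natDegree_snd (j : ℕ) : (airyP j).2.natDegree ≤ j := by
  rw [Polynomial.natDegree_le_iff_coeff_eq_zero]
  exact fun N hN => (airyP_coeff j).2.1 N (by omega)

lemma airy_iteratedDeriv (f : ℂ → ℂ) (hf : Differentiable ℂ f)
    (hODE : ∀ w, iteratedDeriv 2 f w = w * f w) (j : ℕ) (w : ℂ) :
    iteratedDeriv j f w = (airyP j).1.eval w * f w + (airyP j).2.eval w * deriv f w := by
  have hC : ContDiff ℂ (⊤:ℕ∞) f := hf.contDiff
  have hdf : Differentiable ℂ (deriv f) :=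
    (hC.iterate_deriv 1).differentiable (by simp)
  have hdd : ∀ v, deriv (deriv f) v = v * f v := by
    intro v
    have := hODE v
    rwa [iteratedDeriv_succ, iteratedDeriv_one] at this
  induction j generalizing w with
  | zero => simp [airyP]
  | succ j ih =>
    rw [iteratedDeriv_succ]
    have hfun : iteratedDeriv j f = fun v =>
        (airyP j).1.eval v * f v + (airyP j).2.eval v * deriv f v := funext fun v => ih v
    rw [hfun]
    have d1 : ∀ v, HasDerivAt (fun v => (airyP j).1.eval v * f v + (airyP j).2.eval v * deriv f v)
        ((airyP j).1.derivative.eval v * f v + (airyP j).1.eval v * deriv f v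
          + ((airyP j).2.derivative.eval v * deriv f v + (airyP j).2.eval v * (v * f v))) v := by
      intro v
      have := (((airyP j).1.hasDerivAt v).mul (hf v).hasDerivAt).add
        (((airyP j).2.hasDerivAt v).mul (hdf v).hasDerivAt)
      rwa [hdd v] at this
    rw [(d1 w).deriv]
    show _ = ((airyP j).1.derivative + X * (airyP j).2).eval w * f w
        + ((airyP j).1 + (airyP j).2.derivative).eval w * deriv f w
    simp only [Polynomial.eval_add, Polynomial.eval_mul, Polynomial.eval_X]
    ring

lemma sum_range_two_mul (n : ℕ) (g : ℕ → ℂ) :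
    ∑ i ∈ range (2*n), g i = (∑ m ∈ range n, g (2*m)) + ∑ m ∈ range n, g (2*m+1) := by
  induction n with
  | zero => simp
  | succ n ih =>
    have : 2 * (n+1) = (2*n) + 1 + 1 := by ring
    rw [this, Finset.sum_range_succ, Finset.sum_range_succ, ih,
      Finset.sum_range_succ, Finset.sum_range_succ]
    ring

/-- Column reduction using the Airy ODE: if each `f_k` solves `f'' (z) = z f(z)`, then the
matrix with `(k,j)`-entry `z_k^{⌊(j−1)/2⌋} f_k(z_k)` (`j` odd) or
`z_k^{⌊(j−1)/2⌋} f_k'(z_k)` (`j` even) has, up to sign, the same determinant as the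
Wronskian-type matrix `[f_k^{(j−1)}(z_k)]`. -/
theorem airy_column_reduction (n : ℕ) (f : Fin n → ℂ → ℂ) (z : Fin n → ℂ)
    (hdiff : ∀ k, Differentiable ℂ (f k))
    (hODE : ∀ k (w : ℂ), iteratedDeriv 2 (f k) w = w * f k w) :
    Matrix.det (Matrix.of fun k j : Fin n =>
        z k ^ ((j : ℕ) / 2) * (if (j : ℕ) % 2 = 0 then f k (z k) else deriv (f k) (z k)))
      = Matrix.det (Matrix.of fun k j : Fin n => iteratedDeriv (j : ℕ) (f k) (z k))
    ∨ Matrix.det (Matrix.of fun k j : Fin n =>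
        z k ^ ((j : ℕ) / 2) * (if (j : ℕ) % 2 = 0 then f k (z k) else deriv (f k) (z k)))
      = -Matrix.det (Matrix.of fun k j : Fin n => iteratedDeriv (j : ℕ) (f k) (z k)) := by
  left
  set M : Matrix (Fin n) (Fin n) ℂ := Matrix.of fun k j : Fin n =>
      z k ^ ((j : ℕ) / 2) * (if (j : ℕ) % 2 = 0 then f k (z k) else deriv (f k) (z k)) with hM
  set U : Matrix (Fin n) (Fin n) ℂ := Matrix.of fun i j : Fin n =>
      if (i : ℕ) % 2 = 0 then ((airyP (j : ℕ)).1).coeff ((i : ℕ)/2)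
      else ((airyP (j : ℕ)).2).coeff ((i : ℕ)/2) with hU
  have key : (Matrix.of fun k j : Fin n => iteratedDeriv (j : ℕ) (f k) (z k)) = M * U := by
    ext k j
    rw [Matrix.mul_apply]
    have hexp := airy_iteratedDeriv (f k) (hdiff k) (hODE k) (j : ℕ) (z k)
    -- expand the polynomial evaluations as sums over `range n`
    have hdeg1 : ((airyP (j : ℕ)).1).natDegree < n :=
      lt_of_le_of_lt (airyP_natDegree_fst _) j.isLt
    have hdeg2 : ((airyP (j : ℕ)).2).natDegree < n :=
      lt_of_le_of_lt (airyP_natDegree_snd _) j.isLt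
    rw [Matrix.of_apply, hexp, Polynomial.eval_eq_sum_range' hdeg1,
      Polynomial.eval_eq_sum_range' hdeg2, Finset.sum_mul, Finset.sum_mul]
    set g : ℕ → ℂ := fun i => z k ^ (i / 2)
        * (if i % 2 = 0 then f k (z k) else deriv (f k) (z k))
        * (if i % 2 = 0 then (airyP (j:ℕ)).1.coeff (i / 2)
           else (airyP (j:ℕ)).2.coeff (i / 2)) with hg
    have h0 : ∑ i : Fin n, M k i * U i j = ∑ i ∈ range n, g i := by
      rw [← Fin.sum_univ_eq_sum_range g n]
      rfl
    have hext : ∑ i ∈ range n, g i = ∑ i ∈ range (2*n), g i := by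
      apply Finset.sum_subset
      · intro x hx
        simp only [Finset.mem_range] at *
        omega
      · intro x _ hnx
        simp only [Finset.mem_range, not_lt] at hnx
        have hj : (j:ℕ) < x := lt_of_lt_of_le j.isLt hnx
        simp only [hg]
        split_ifs with h
        · rw [(airyP_coeff _).1 (x/2) (by omega), mul_zero]
        · rw [(airyP_coeff _).2.1 (x/2) (by omega), mul_zero]
    have he : ∀ m, g (2*m) = (airyP (j:ℕ)).1.coeff m * z k ^ m * f k (z k) := by
      intro m
      have h1 : (2*m) % 2 = 0 := by omega
      have h2 : (2*m) / 2 = m := by omega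
      simp only [hg, h1, h2, if_true]
      ring
    have ho : ∀ m, g (2*m+1) = (airyP (j:ℕ)).2.coeff m * z k ^ m * deriv (f k) (z k) := by
      intro m
      have h1 : (2*m+1) % 2 = 1 := by omega
      have h2 : (2*m+1) / 2 = m := by omega
      simp only [hg, h1, h2, Nat.one_ne_zero, if_false]
      ring
    rw [h0, hext, sum_range_two_mul]
    congr 1
    · exact Finset.sum_congr rfl fun m _ => (he m).symm
    · exact Finset.sum_congr rfl fun m _ => (ho m).symm
  rw [key, Matrix.det_mul]
  have hUdet : U.det = 1 := by
    have htri : U.BlockTriangular id := by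
      intro i j hij
      simp only [hU, Matrix.of_apply]
      have hij' : (j : ℕ) < (i : ℕ) := hij
      split_ifs with h
      · exact (airyP_coeff _).1 _ (by omega)
      · exact (airyP_coeff _).2.1 _ (by omega)
    rw [Matrix.det_of_upperTriangular htri]
    apply Finset.prod_eq_one
    intro i _
    simp only [hU, Matrix.of_apply]
    split_ifs with h
    · exact (airyP_coeff _).2.2.1 h
    · exact (airyP_coeff _).2.2.2 (by omega)
  rw [hUdet, mul_one]
end
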